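/- Every metrizable space is a D-space. -/

import Mathlib

open Set Topology

/-- The core (F) condition for a family `W` assigning to each point a collection of subsets. -/
def FFamilyCondition {X : Type*} [TopologicalSpace X] (W : X → Set (Set X)) : Prop :=
  (∀ x, ∀ w ∈ W x, x ∈ w) ∧
  ∀ x U, IsOpen U → x ∈ U → ∃ V, IsOpen V ∧ x ∈ V ∧
    ∀ y ∈ V, ∃ w ∈ W y, x ∈ w ∧ w ⊆ U

/-- `X` satisfies well-ordered (F): each `W x` is well-ordered by reverse inclusion. -/
def SatisfiesWellOrderedF (X : Type*) [TopologicalSpace X] : Prop :=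
  ∃ W : X → Set (Set X),
    (∀ x, IsWellOrder (W x) (fun A B => (B : Set X) ⊂ (A : Set X))) ∧
    FFamilyCondition W

/-- `X` satisfies chain (F): each `W x` is linearly ordered by (reverse) inclusion. -/
def SatisfiesChainF (X : Type*) [TopologicalSpace X] : Prop :=
  ∃ W : X → Set (Set X),
    (∀ x, IsChain (· ⊆ ·) (W x)) ∧
    FFamilyCondition W

/-- `X` satisfies decreasing (G). -/
def SatisfiesDecreasingG (X : Type*) [TopologicalSpace X] : Prop :=
  ∃ W : X → ℕ → Set X,
    (∀ x k, x ∈ W x k) ∧ (∀ x k, W x (k + 1) ⊆ W x k) ∧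
    ∀ x U, IsOpen U → x ∈ U → ∃ V, IsOpen V ∧ x ∈ V ∧
      ∀ y ∈ V, ∃ m, x ∈ W y m ∧ W y m ⊆ U

universe u_hn

/-- The `H`/`n` characterization with ordinal-valued `n`. -/
def HNAssignment (X : Type u_hn) [TopologicalSpace X] : Prop :=
  ∃ (H : X → Set X → Set X) (n : X → X → Set X → Ordinal.{u_hn}),
    (∀ x U, IsOpen U → x ∈ U → IsOpen (H x U) ∧ x ∈ H x U) ∧
    (∀ a x y U V, IsOpen U → x ∈ U → IsOpen V → y ∈ V →
      a ∈ H x U → a ∈ H y V → n a x U ≤ n a y V → y ∈ U)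

/-- `X` is a D-space: every neighborhood assignment has a closed discrete kernel. -/
def IsDSpace (X : Type*) [TopologicalSpace X] : Prop :=
  ∀ φ : X → Set X, (∀ x, IsOpen (φ x)) → (∀ x, x ∈ φ x) →
    ∃ D : Set X, IsClosed D ∧ DiscreteTopology D ∧ ⋃ d ∈ D, φ d = Set.univ

section DSpaceAux

open Metric

variable {Y : Type*} [MetricSpace Y]

private lemma exists_max_sep (S : Set Y) {r : ℝ} (hr : 0 < r) :
    ∃ T, T ⊆ S ∧ (T.Pairwise fun a b => r ≤ dist a b) ∧
      ∀ x ∈ S, ∃ t ∈ T, dist x t < r := by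
  have hch : ∀ c ⊆ {T | T ⊆ S ∧ T.Pairwise fun a b => r ≤ dist a b},
      IsChain (· ⊆ ·) c → ∃ ub ∈ {T | T ⊆ S ∧ T.Pairwise fun a b => r ≤ dist a b},
        ∀ s ∈ c, s ⊆ ub := by
    intro c hc hchain
    refine ⟨⋃₀ c, ⟨?_, ?_⟩, fun s hs => subset_sUnion_of_mem hs⟩
    · exact sUnion_subset fun s hs => (hc hs).1
    · intro a ha b hb hab
      obtain ⟨s, hs, has⟩ := ha
      obtain ⟨t, ht, hbt⟩ := hb
      rcases hchain.total hs ht with h | h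
      · exact (hc ht).2 (h has) hbt hab
      · exact (hc hs).2 has (h hbt) hab
  obtain ⟨T, hT⟩ := zorn_subset {T | T ⊆ S ∧ T.Pairwise fun a b => r ≤ dist a b} hch
  · refine ⟨T, hT.prop.1, hT.prop.2, fun x hx => ?_⟩
    by_contra h
    push_neg at h
    have hxT : x ∉ T := by
      intro hxT
      have := h x hxT
      simp only [dist_self] at this
      exact absurd this (not_le.mpr hr)
    have hins : insert x T ∈ {T | T ⊆ S ∧ T.Pairwise fun a b => r ≤ dist a b} := by
      refine ⟨insert_subset hx hT.prop.1, (Set.pairwise_insert (r := fun a b => r ≤ dist a b)).mpr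
        ⟨hT.prop.2, fun b hb _ => ⟨h b hb, by rw [dist_comm]; exact h b hb⟩⟩⟩
    have := hT.2 hins (subset_insert x T)
    exact hxT (this (mem_insert x T))

private noncomputable def dStep (φ : Y → Set Y) (C : Set Y) (n : ℕ) : Set Y :=
  (exists_max_sep ({x | ball x ((2:ℝ)⁻¹ ^ n) ⊆ φ x} \ C)
    (pow_pos (by norm_num : (0:ℝ) < 2⁻¹) n)).choose

private lemma dStep_spec (φ : Y → Set Y) (C : Set Y) (n : ℕ) :
    dStep φ C n ⊆ {x | ball x ((2:ℝ)⁻¹ ^ n) ⊆ φ x} \ C ∧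
    (dStep φ C n).Pairwise (fun a b => (2:ℝ)⁻¹ ^ n ≤ dist a b) ∧
    ∀ x, ball x ((2:ℝ)⁻¹ ^ n) ⊆ φ x → x ∉ C →
      ∃ t ∈ dStep φ C n, dist x t < (2:ℝ)⁻¹ ^ n := by
  have h := (exists_max_sep ({x | ball x ((2:ℝ)⁻¹ ^ n) ⊆ φ x} \ C)
    (pow_pos (by norm_num : (0:ℝ) < 2⁻¹) n)).choose_spec
  exact ⟨h.1, h.2.1, fun x h1 h2 => h.2.2 x ⟨h1, h2⟩⟩

private noncomputable def dCov (φ : Y → Set Y) : ℕ → Set Y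
  | 0 => ∅
  | n + 1 => dCov φ n ∪ ⋃ d ∈ dStep φ (dCov φ n) n, φ d

private noncomputable def dT (φ : Y → Set Y) (n : ℕ) : Set Y := dStep φ (dCov φ n) n

private lemma metric_isDSpace : IsDSpace Y := by
  intro φ hopen hmem
  set D : Set Y := ⋃ n, dT φ n with hD
  have hcovmono : Monotone (dCov φ) :=
    monotone_nat_of_le_succ fun n => by
      rw [show dCov φ (n+1) = dCov φ n ∪ ⋃ d ∈ dStep φ (dCov φ n) n, φ d from rfl]
      exact subset_union_left
  have hTsub : ∀ n, dT φ n ⊆ {x | ball x ((2:ℝ)⁻¹ ^ n) ⊆ φ x} \ dCov φ n :=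
    fun n => (dStep_spec φ (dCov φ n) n).1
  have hphisub : ∀ n, ∀ d ∈ dT φ n, φ d ⊆ dCov φ (n + 1) := by
    intro n d hd
    rw [show dCov φ (n+1) = dCov φ n ∪ ⋃ d ∈ dStep φ (dCov φ n) n, φ d from rfl]
    exact (subset_biUnion_of_mem hd).trans subset_union_right
  -- coverage
  have cover : ∀ x : Y, ∃ d ∈ D, x ∈ φ d := by
    intro x
    obtain ⟨ε, hε, hball⟩ := Metric.isOpen_iff.mp (hopen x) x (hmem x)
    obtain ⟨n, hn⟩ := exists_pow_lt_of_lt_one hε (by norm_num : (2:ℝ)⁻¹ < 1)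
    have hb : ball x ((2:ℝ)⁻¹ ^ n) ⊆ φ x :=
      (ball_subset_ball hn.le).trans hball
    by_cases hx : x ∈ dCov φ n
    · have : ∀ m, ∀ y ∈ dCov φ m, ∃ d ∈ D, y ∈ φ d := by
        intro m
        induction m with
        | zero => intro y hy; exact absurd hy (notMem_empty y)
        | succ k ih =>
          intro y hy
          rcases hy with hy | hy
          · exact ih y hy
          · obtain ⟨d, hd, hyd⟩ := mem_iUnion₂.mp hy
            exact ⟨d, mem_iUnion.mpr ⟨k, hd⟩, hyd⟩
      exact this n x hx
    · obtain ⟨t, ht, hdt⟩ := (dStep_spec φ (dCov φ n) n).2.2 x hb hx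
      exact ⟨t, mem_iUnion.mpr ⟨n, ht⟩, (hTsub n ht).1 (mem_ball.mpr hdt)⟩
  -- local finiteness
  have key : ∀ x : Y, ∃ V, IsOpen V ∧ x ∈ V ∧ (V ∩ D).Finite := by
    intro x
    obtain ⟨d, hdD, hxd⟩ := cover x
    obtain ⟨m, hdm⟩ := mem_iUnion.mp hdD
    set ρ : ℝ := (2:ℝ)⁻¹ ^ m / 2 with hρ
    have hρpos : 0 < ρ := by positivity
    refine ⟨φ d ∩ ball x ρ, (hopen d).inter isOpen_ball, ⟨hxd, mem_ball_self hρpos⟩, ?_⟩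
    have hsub : φ d ∩ ball x ρ ∩ D ⊆ ⋃ k ∈ Finset.range (m + 1), (dT φ k ∩ ball x ρ) := by
      rintro y ⟨⟨hyd, hyb⟩, hyD⟩
      obtain ⟨k, hk⟩ := mem_iUnion.mp hyD
      have hkm : k ≤ m := by
        by_contra hkm
        push_neg at hkm
        have h1 : y ∉ dCov φ k := (hTsub k hk).2
        have h2 : φ d ⊆ dCov φ k := (hphisub m d hdm).trans (hcovmono hkm)
        exact h1 (h2 hyd)
      exact mem_biUnion (Finset.mem_range.mpr (Nat.lt_succ_of_le hkm)) ⟨hk, hyb⟩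
    refine Set.Finite.subset (Set.Finite.biUnion (Finset.range (m+1)).finite_toSet
      fun k hk => ?_) hsub
    refine Set.Subsingleton.finite ?_
    rintro a ⟨haT, hab⟩ b ⟨hbT, hbb⟩
    by_contra hne
    have hrk : (2:ℝ)⁻¹ ^ k ≤ dist a b := (dStep_spec φ (dCov φ k) k).2.1 haT hbT hne
    have hax : dist a x < ρ := mem_ball.mp hab
    have hbx : dist x b < ρ := by rw [dist_comm]; exact mem_ball.mp hbb
    have hd2 : dist a b < (2:ℝ)⁻¹ ^ m := by
      calc dist a b ≤ dist a x + dist x b := dist_triangle a x b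
        _ < ρ + ρ := by linarith
        _ = (2:ℝ)⁻¹ ^ m := by rw [hρ]; ring
    have hkm : k ≤ m := Nat.lt_succ_iff.mp (Finset.mem_range.mp hk)
    have : (2:ℝ)⁻¹ ^ m ≤ (2:ℝ)⁻¹ ^ k :=
      pow_le_pow_of_le_one (by norm_num) (by norm_num) hkm
    linarith
  have key2 : ∀ x : Y, ∃ V, IsOpen V ∧ x ∈ V ∧ V ∩ D ⊆ {x} := by
    intro x
    obtain ⟨V, hVo, hxV, hVf⟩ := key x
    refine ⟨V \ ((V ∩ D) \ {x}), hVo.sdiff ((hVf.subset diff_subset).isClosed), ⟨hxV, ?_⟩, ?_⟩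
    · simp
    · rintro y ⟨⟨hyV, hy2⟩, hyD⟩
      by_contra hne
      exact hy2 ⟨⟨hyV, hyD⟩, hne⟩
  refine ⟨D, ?_, ?_, ?_⟩
  · rw [← isOpen_compl_iff, isOpen_iff_mem_nhds]
    intro x hx
    obtain ⟨V, hVo, hxV, hVD⟩ := key2 x
    filter_upwards [hVo.mem_nhds hxV] with y hyV hyD
    exact hx (by rwa [show y = x from hVD ⟨hyV, hyD⟩] at hyD)
  · rw [discreteTopology_iff_isOpen_singleton]
    rintro ⟨a, ha⟩
    obtain ⟨V, hVo, haV, hVD⟩ := key2 a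
    have : {(⟨a, ha⟩ : D)} = (Subtype.val) ⁻¹' V := by
      ext b
      simp only [mem_singleton_iff, mem_preimage]
      constructor
      · rintro rfl; exact haV
      · intro hbV
        exact Subtype.ext (hVD ⟨hbV, b.2⟩)
    rw [this]
    exact hVo.preimage continuous_subtype_val
  · rw [eq_univ_iff_forall]
    intro x
    obtain ⟨d, hdD, hxd⟩ := cover x
    exact mem_biUnion hdD hxd

end DSpaceAux

theorem stmt9 {X : Type*} [TopologicalSpace X] [TopologicalSpace.MetrizableSpace X] :
    IsDSpace X := by
  letI : MetricSpace X := TopologicalSpace.metrizableSpaceMetric X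
  exact metric_isDSpace
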